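/- Let s̃ ∈ ℝ^n, let M̃[i,j] be the mean of s̃ over indices [i,j], and let s̄ be the unique nondecreasing minimizer of ‖s̃ − t‖₂ over nondecreasing t ∈ ℝ^n. Then: (i) s̄[1] ≤ M̃[1,j] for all j ∈ [1,n], i.e., s̄[1] ≤ min_j M̃[1,j]; (ii) s̄[n] ≥ M̃[i,n] for all i ∈ [1,n], i.e., s̄[n] ≥ max_i M̃[i,n]; and (iii) for every k, min(s̄[k+1], max_{i ∈ [1,k]} M̃[i,k]) ≤ s̄[k] ≤ max(s̄[k−1], min_{j ∈ [k,n]} M̃[k,j]) (with the convention that the terms s̄[k+1] and s̄[k−1] are omitted when k = n or k = 1 respectively). -/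
import Mathlib


/-- `seqMean t i j` is the mean `M̃[i,j]` of the entries of `t` with indices in `[i,j]`. -/
noncomputable def seqMean {n : ℕ} (t : Fin n → ℝ) (i j : Fin n) : ℝ :=
  (∑ k ∈ Finset.Icc i j, t k) / (((j : ℕ) - (i : ℕ) + 1 : ℕ) : ℝ)

/-- `Msup t k = max_{i ∈ [1,k]} M̃[i,k]`. -/
noncomputable def Msup {n : ℕ} (t : Fin n → ℝ) (k : Fin n) : ℝ :=
  (Finset.univ.filter fun i => i ≤ k).sup' ⟨k, by simp⟩ fun i => seqMean t i k

/-- `Minf t k = min_{j ∈ [k,n]} M̃[k,j]`. -/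
noncomputable def Minf {n : ℕ} (t : Fin n → ℝ) (k : Fin n) : ℝ :=
  (Finset.univ.filter fun j => k ≤ j).inf' ⟨k, by simp⟩ fun j => seqMean t k j

/-- Decreasing perturbation: sum of residuals over `[i,j]` is nonnegative when one can
decrease `sbar` on `[i,j]`. -/
lemma dec_key {n : ℕ} (st sbar : Fin n → ℝ) (hmono : Monotone sbar)
    (hmin : ∀ t : Fin n → ℝ, Monotone t →
      ∑ k, (st k - sbar k) ^ 2 ≤ ∑ k, (st k - t k) ^ 2)
    (i j : Fin n)
    (hi : (i : ℕ) = 0 ∨ sbar ⟨(i : ℕ) - 1, lt_of_le_of_lt (Nat.sub_le _ _) i.isLt⟩ < sbar i) :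
    0 ≤ ∑ m ∈ Finset.Icc i j, (st m - sbar m) := by
  by_contra hcon
  push_neg at hcon
  set S := ∑ m ∈ Finset.Icc i j, (st m - sbar m) with hSdef
  have hij : i ≤ j := by
    by_contra hij
    rw [hSdef, Finset.Icc_eq_empty hij] at hcon; simp at hcon
  set δ : ℝ := if _ : (i : ℕ) = 0 then 1
    else sbar i - sbar ⟨(i : ℕ) - 1, lt_of_le_of_lt (Nat.sub_le _ _) i.isLt⟩ with hδdef
  have hδ : 0 < δ := by
    rw [hδdef]; split
    · norm_num
    · rcases hi with h | h
      · omega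
      · linarith
  set C : ℝ := ((Finset.Icc i j).card : ℝ) with hCdef
  have hcard : 0 < (Finset.Icc i j).card :=
    Finset.card_pos.mpr ⟨i, Finset.mem_Icc.mpr ⟨le_refl _, hij⟩⟩
  have hC : 0 < C := by rw [hCdef]; exact_mod_cast hcard
  set ε : ℝ := min δ (-S / C) with hεdef
  have hε : 0 < ε := lt_min hδ (div_pos (by linarith) hC)
  set t : Fin n → ℝ := fun m => sbar m - (if m ∈ Finset.Icc i j then ε else 0) with htdef
  have hmt : Monotone t := by
    intro a b hab
    rw [htdef]
    by_cases ha : a ∈ Finset.Icc i j <;> by_cases hb : b ∈ Finset.Icc i j <;>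
      simp only [ha, hb, if_true, if_false, if_pos, if_neg]
    · have := hmono hab; linarith
    · have := hmono hab; linarith
    · -- a ∉, b ∈ : a < i
      have hbi := (Finset.mem_Icc.mp hb)
      have hai : a < i := by
        by_contra h
        exact ha (Finset.mem_Icc.mpr ⟨le_of_not_gt h, le_trans hab hbi.2⟩)
      have hi0 : ¬ (i : ℕ) = 0 := by
        intro h0
        have : (a : ℕ) < (i : ℕ) := hai
        omega
      have hεδ : ε ≤ δ := min_le_left _ _
      rw [hδdef, dif_neg hi0] at hεδ
      have hale : sbar a ≤ sbar ⟨(i : ℕ) - 1, lt_of_le_of_lt (Nat.sub_le _ _) i.isLt⟩ := by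
        apply hmono
        rw [Fin.le_def]
        simp only []
        have : (a : ℕ) < (i : ℕ) := hai
        omega
      have hib : sbar i ≤ sbar b := hmono hbi.1
      simp only [sub_zero]
      linarith
    · have := hmono hab; linarith
  have hsum := hmin t hmt
  have hexp : ∀ k : Fin n, (st k - t k) ^ 2
      = (st k - sbar k) ^ 2 + (if k ∈ Finset.Icc i j then 2 * ε * (st k - sbar k) + ε ^ 2 else 0) := by
    intro k
    rw [htdef]
    by_cases hk : k ∈ Finset.Icc i j <;> simp only [hk, if_true, if_false] <;> ring
  have hsum2 : ∑ k, (st k - t k) ^ 2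
      = (∑ k, (st k - sbar k) ^ 2) + (2 * ε * S + C * ε ^ 2) := by
    simp only [hexp]
    rw [Finset.sum_add_distrib]
    congr 1
    rw [Finset.sum_ite_mem, Finset.univ_inter, Finset.sum_add_distrib, ← Finset.mul_sum,
      Finset.sum_const, ← hSdef, nsmul_eq_mul, ← hCdef]
  rw [hsum2] at hsum
  have h1 : 0 ≤ 2 * ε * S + C * ε ^ 2 := by linarith
  have h2 : ε ≤ -S / C := min_le_right _ _
  have h3 : C * ε ≤ -S := by
    rw [le_div_iff₀ hC] at h2; linarith
  nlinarith

/-- Increasing perturbation: sum of residuals over `[i,j]` is nonpositive when one can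
increase `sbar` on `[i,j]`. -/
lemma inc_key {n : ℕ} (st sbar : Fin n → ℝ) (hmono : Monotone sbar)
    (hmin : ∀ t : Fin n → ℝ, Monotone t →
      ∑ k, (st k - sbar k) ^ 2 ≤ ∑ k, (st k - t k) ^ 2)
    (i j : Fin n)
    (hj : (j : ℕ) + 1 = n ∨ ∃ h : (j : ℕ) + 1 < n, sbar j < sbar ⟨(j : ℕ) + 1, h⟩) :
    ∑ m ∈ Finset.Icc i j, (st m - sbar m) ≤ 0 := by
  by_contra hcon
  push_neg at hcon
  set S := ∑ m ∈ Finset.Icc i j, (st m - sbar m) with hSdef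
  have hij : i ≤ j := by
    by_contra hij
    rw [hSdef, Finset.Icc_eq_empty hij] at hcon; simp at hcon
  set δ : ℝ := if h : (j : ℕ) + 1 < n then sbar ⟨(j : ℕ) + 1, h⟩ - sbar j else 1 with hδdef
  have hδ : 0 < δ := by
    rw [hδdef]; split
    · rcases hj with h | ⟨h1, h2⟩
      · omega
      · linarith
    · norm_num
  set C : ℝ := ((Finset.Icc i j).card : ℝ) with hCdef
  have hcard : 0 < (Finset.Icc i j).card :=
    Finset.card_pos.mpr ⟨i, Finset.mem_Icc.mpr ⟨le_refl _, hij⟩⟩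
  have hC : 0 < C := by rw [hCdef]; exact_mod_cast hcard
  set ε : ℝ := min δ (S / C) with hεdef
  have hε : 0 < ε := lt_min hδ (div_pos hcon hC)
  set t : Fin n → ℝ := fun m => sbar m + (if m ∈ Finset.Icc i j then ε else 0) with htdef
  have hmt : Monotone t := by
    intro a b hab
    rw [htdef]
    by_cases ha : a ∈ Finset.Icc i j <;> by_cases hb : b ∈ Finset.Icc i j <;>
      simp only [ha, hb, if_true, if_false]
    · have := hmono hab; linarith
    · -- a ∈, b ∉ : j < b
      have hai := Finset.mem_Icc.mp ha
      have hjb : j < b := by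
        by_contra h
        exact hb (Finset.mem_Icc.mpr ⟨le_trans hai.1 hab, le_of_not_gt h⟩)
      have hjn : (j : ℕ) + 1 < n := by
        have : (j : ℕ) < (b : ℕ) := hjb
        have := b.isLt
        omega
      have hεδ : ε ≤ δ := min_le_left _ _
      rw [hδdef, dif_pos hjn] at hεδ
      have hble : sbar ⟨(j : ℕ) + 1, hjn⟩ ≤ sbar b := by
        apply hmono
        rw [Fin.le_def]
        simp only []
        have : (j : ℕ) < (b : ℕ) := hjb
        omega
      have haj : sbar a ≤ sbar j := hmono hai.2
      simp only [add_zero]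
      linarith
    · have := hmono hab; linarith
    · have := hmono hab; linarith
  have hsum := hmin t hmt
  have hexp : ∀ k : Fin n, (st k - t k) ^ 2
      = (st k - sbar k) ^ 2 + (if k ∈ Finset.Icc i j then -(2 * ε * (st k - sbar k)) + ε ^ 2 else 0) := by
    intro k
    rw [htdef]
    by_cases hk : k ∈ Finset.Icc i j <;> simp only [hk, if_true, if_false] <;> ring
  have hsum2 : ∑ k, (st k - t k) ^ 2
      = (∑ k, (st k - sbar k) ^ 2) + (-(2 * ε * S) + C * ε ^ 2) := by
    simp only [hexp]
    rw [Finset.sum_add_distrib]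
    congr 1
    rw [Finset.sum_ite_mem, Finset.univ_inter, Finset.sum_add_distrib, Finset.sum_neg_distrib,
      ← Finset.mul_sum, Finset.sum_const, ← hSdef, nsmul_eq_mul, ← hCdef]
  rw [hsum2] at hsum
  have h1 : 0 ≤ -(2 * ε * S) + C * ε ^ 2 := by linarith
  have h2 : ε ≤ S / C := min_le_right _ _
  have h3 : C * ε ≤ S := by
    rw [le_div_iff₀ hC] at h2; linarith
  nlinarith

lemma mean_ge {n : ℕ} (st sbar : Fin n → ℝ) (hmono : Monotone sbar) (i j : Fin n) (hij : i ≤ j)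
    (hS : 0 ≤ ∑ m ∈ Finset.Icc i j, (st m - sbar m)) : sbar i ≤ seqMean st i j := by
  have hcard : (Finset.Icc i j).card = (j : ℕ) - (i : ℕ) + 1 := by
    rw [Fin.card_Icc]
    have : (i : ℕ) ≤ (j : ℕ) := hij
    omega
  have h1 : (Finset.Icc i j).card • sbar i ≤ ∑ m ∈ Finset.Icc i j, sbar m :=
    Finset.card_nsmul_le_sum _ _ _ fun m hm => hmono (Finset.mem_Icc.mp hm).1
  rw [hcard, nsmul_eq_mul] at h1
  have h2 : ∑ m ∈ Finset.Icc i j, sbar m ≤ ∑ m ∈ Finset.Icc i j, st m := by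
    rw [Finset.sum_sub_distrib] at hS
    linarith
  have hD : (0 : ℝ) < (((j : ℕ) - (i : ℕ) + 1 : ℕ) : ℝ) := by positivity
  rw [seqMean, le_div_iff₀ hD]
  calc sbar i * (((j : ℕ) - (i : ℕ) + 1 : ℕ) : ℝ)
      = (((j : ℕ) - (i : ℕ) + 1 : ℕ) : ℝ) * sbar i := by ring
    _ ≤ ∑ m ∈ Finset.Icc i j, sbar m := h1
    _ ≤ _ := h2

lemma mean_le {n : ℕ} (st sbar : Fin n → ℝ) (hmono : Monotone sbar) (i j : Fin n) (hij : i ≤ j)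
    (hS : ∑ m ∈ Finset.Icc i j, (st m - sbar m) ≤ 0) : seqMean st i j ≤ sbar j := by
  have hcard : (Finset.Icc i j).card = (j : ℕ) - (i : ℕ) + 1 := by
    rw [Fin.card_Icc]
    have : (i : ℕ) ≤ (j : ℕ) := hij
    omega
  have h1 : ∑ m ∈ Finset.Icc i j, sbar m ≤ (Finset.Icc i j).card • sbar j :=
    Finset.sum_le_card_nsmul _ _ _ fun m hm => hmono (Finset.mem_Icc.mp hm).2
  rw [hcard, nsmul_eq_mul] at h1
  have h2 : ∑ m ∈ Finset.Icc i j, st m ≤ ∑ m ∈ Finset.Icc i j, sbar m := by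
    rw [Finset.sum_sub_distrib] at hS
    linarith
  have hD : (0 : ℝ) < (((j : ℕ) - (i : ℕ) + 1 : ℕ) : ℝ) := by positivity
  rw [seqMean, div_le_iff₀ hD]
  calc ∑ m ∈ Finset.Icc i j, st m
      ≤ (((j : ℕ) - (i : ℕ) + 1 : ℕ) : ℝ) * sbar j := le_trans h2 h1
    _ = sbar j * (((j : ℕ) - (i : ℕ) + 1 : ℕ) : ℝ) := by ring

/-- **Bounds satisfied by the minimum `L₂` nondecreasing solution.**
Let `s̄` be the unique nondecreasing minimizer of `‖s̃ − t‖₂` over nondecreasing `t`.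
Then: (i) `s̄[1] ≤ M̃[1,j]` for all `j`; (ii) `s̄[n] ≥ M̃[i,n]` for all `i`; and (iii)
for every `k`, `min(s̄[k+1], max_{i ≤ k} M̃[i,k]) ≤ s̄[k] ≤ max(s̄[k−1], min_{j ≥ k} M̃[k,j])`,
where the terms `s̄[k+1]` and `s̄[k−1]` are omitted when `k` is the last, resp. first,
index. -/
theorem isotonic_minimizer_bounds (n : ℕ) (hn : 0 < n) (st : Fin n → ℝ)
    (sbar : Fin n → ℝ)
    (hmono : Monotone sbar)
    (hmin : ∀ t : Fin n → ℝ, Monotone t →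
      ∑ k, (st k - sbar k) ^ 2 ≤ ∑ k, (st k - t k) ^ 2)
    (huniq : ∀ t : Fin n → ℝ, Monotone t →
      (∑ k, (st k - t k) ^ 2 = ∑ k, (st k - sbar k) ^ 2) → t = sbar) :
    (∀ j : Fin n, sbar ⟨0, hn⟩ ≤ seqMean st ⟨0, hn⟩ j)
    ∧ (∀ i : Fin n, seqMean st i ⟨n - 1, by omega⟩ ≤ sbar ⟨n - 1, by omega⟩)
    ∧ (∀ k : Fin n,
        (∀ h : (k : ℕ) + 1 < n, min (sbar ⟨(k : ℕ) + 1, h⟩) (Msup st k) ≤ sbar k)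
        ∧ ((k : ℕ) + 1 = n → Msup st k ≤ sbar k)
        ∧ (0 < (k : ℕ) →
            sbar k ≤ max (sbar ⟨(k : ℕ) - 1, lt_of_le_of_lt (Nat.sub_le _ _) k.isLt⟩)
              (Minf st k))
        ∧ ((k : ℕ) = 0 → sbar k ≤ Minf st k)) := by
  refine ⟨?_, ?_, ?_⟩
  · intro j
    exact mean_ge st sbar hmono ⟨0, hn⟩ j (by rw [Fin.le_def]; exact Nat.zero_le _)
      (dec_key st sbar hmono hmin ⟨0, hn⟩ j (Or.inl rfl))
  · intro i
    have hle : i ≤ (⟨n - 1, by omega⟩ : Fin n) := by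
      rw [Fin.le_def]; have := i.isLt; simp only []; omega
    refine mean_le st sbar hmono i ⟨n - 1, by omega⟩ hle
      (inc_key st sbar hmono hmin i ⟨n - 1, by omega⟩ (Or.inl ?_))
    simp only []
    omega
  · intro k
    refine ⟨?_, ?_, ?_, ?_⟩
    · intro h
      by_cases heq : sbar k = sbar ⟨(k : ℕ) + 1, h⟩
      · exact le_trans (min_le_left _ _) (le_of_eq heq.symm)
      · have hlt : sbar k < sbar ⟨(k : ℕ) + 1, h⟩ :=
          lt_of_le_of_ne (hmono (by rw [Fin.le_def]; simp only []; omega)) heq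
        refine le_trans (min_le_right _ _) (Finset.sup'_le _ _ fun i hi => ?_)
        rw [Finset.mem_filter] at hi
        exact mean_le st sbar hmono i k hi.2
          (inc_key st sbar hmono hmin i k (Or.inr ⟨h, hlt⟩))
    · intro h
      refine Finset.sup'_le _ _ fun i hi => ?_
      rw [Finset.mem_filter] at hi
      exact mean_le st sbar hmono i k hi.2 (inc_key st sbar hmono hmin i k (Or.inl h))
    · intro h
      by_cases heq : sbar ⟨(k : ℕ) - 1, lt_of_le_of_lt (Nat.sub_le _ _) k.isLt⟩ = sbar k
      · exact le_trans (le_of_eq heq.symm) (le_max_left _ _)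
      · have hlt : sbar ⟨(k : ℕ) - 1, lt_of_le_of_lt (Nat.sub_le _ _) k.isLt⟩ < sbar k :=
          lt_of_le_of_ne (hmono (by rw [Fin.le_def]; simp only []; omega)) heq
        refine le_trans (Finset.le_inf' _ _ fun j hj => ?_) (le_max_right _ _)
        rw [Finset.mem_filter] at hj
        exact mean_ge st sbar hmono k j hj.2
          (dec_key st sbar hmono hmin k j (Or.inr hlt))
    · intro h
      refine Finset.le_inf' _ _ fun j hj => ?_
      rw [Finset.mem_filter] at hj
      exact mean_ge st sbar hmono k j hj.2 (dec_key st sbar hmono hmin k j (Or.inl h))
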